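/- arXiv:1210.3863 — 2 statements merged into one kernel-verified Lean document; each statement's English description precedes it below -/
import Mathlib

section
/- Let K be a number field, ℓ a prime dividing m_K, and b_ℓ := ord_ℓ(m_K). Then for every integer k ≥ 0, φ_K(ℓ^{b_ℓ+k}) = ℓ^k · φ_K(ℓ^{b_ℓ}). -/
open IntermediateField NumberField Filter Asymptotics
open scoped Classical

/-- `φ_K(q) := [K(ζ_q) : K]`, the degree of the `q`-th cyclotomic extension of `K`,
realized inside an algebraic closure of `K`. -/
noncomputable def phiK (K : Type) [Field K] [NumberField K] (q : ℕ) : ℕ :=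
  Module.finrank K ↥(IntermediateField.adjoin K {x : AlgebraicClosure K | x ^ q = 1})

/-- The image of `K` in its algebraic closure, as an intermediate field of `ℚ`. -/
noncomputable def KF (K : Type) [Field K] [NumberField K] :
    IntermediateField ℚ (AlgebraicClosure K) :=
  IntermediateField.restrictScalars ℚ (⊥ : IntermediateField K (AlgebraicClosure K))

/-- `ℚ(ζ_m)` inside the algebraic closure of `K`. -/
noncomputable def Qz (K : Type) [Field K] [NumberField K] (m : ℕ) :
    IntermediateField ℚ (AlgebraicClosure K) :=
  IntermediateField.adjoin ℚ {x : AlgebraicClosure K | x ^ m = 1}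

/-- `ℚ^cyc`, the compositum of all cyclotomic fields, inside the algebraic closure of `K`. -/
noncomputable def Qcyc (K : Type) [Field K] [NumberField K] :
    IntermediateField ℚ (AlgebraicClosure K) :=
  IntermediateField.adjoin ℚ {x : AlgebraicClosure K | ∃ n : ℕ, 0 < n ∧ x ^ n = 1}

/-- `m_K`: the smallest positive integer `m` such that the maximal abelian subfield
`K ∩ ℚ^cyc` of `K` is contained in `ℚ(ζ_m)`. -/
noncomputable def mK (K : Type) [Field K] [NumberField K] : ℕ :=
  sInf {m : ℕ | 0 < m ∧ KF K ⊓ Qcyc K ≤ Qz K m}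

set_option synthInstance.maxHeartbeats 1000000
set_option maxHeartbeats 2000000
set_option linter.unusedSectionVars false
set_option linter.unusedVariables false

section AuxMain
open Polynomial

variable (K : Type) [Field K] [NumberField K]

local notation "A" => AlgebraicClosure K

lemma Qz_mono {m n : ℕ} (h : m ∣ n) : Qz K m ≤ Qz K n := by
  apply IntermediateField.adjoin.mono
  intro x hx
  obtain ⟨c, rfl⟩ := h
  simp only [Set.mem_setOf_eq] at hx ⊢
  rw [pow_mul, hx, one_pow]

lemma exists_primroot {n : ℕ} (hn : 0 < n) : ∃ ζ : A, IsPrimitiveRoot ζ n := by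
  haveI : NeZero (n : A) := ⟨Nat.cast_ne_zero.2 hn.ne'⟩
  exact HasEnoughRootsOfUnity.exists_primitiveRoot A n

lemma adjoin_pow_eq_simple (F : Type*) [Field F] [Algebra F (A)] {n : ℕ} (hn : 0 < n)
    {ζ : A} (hζ : IsPrimitiveRoot ζ n) :
    IntermediateField.adjoin F {x : A | x ^ n = 1} = F⟮ζ⟯ := by
  haveI : NeZero n := ⟨hn.ne'⟩
  apply le_antisymm
  · rw [IntermediateField.adjoin_le_iff]
    intro x hx
    obtain ⟨i, _, rfl⟩ := hζ.eq_pow_of_pow_eq_one hx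
    exact pow_mem (IntermediateField.mem_adjoin_simple_self F ζ) i
  · rw [IntermediateField.adjoin_simple_le_iff]
    exact IntermediateField.subset_adjoin F _ hζ.pow_eq_one

lemma zeta_integral (ζ : A) : IsIntegral ℚ ζ :=
  by haveI := Algebra.IsAlgebraic.trans ℚ K (A); exact (Algebra.IsAlgebraic.isAlgebraic ζ).isIntegral

lemma Qz_eq_simple {n : ℕ} (hn : 0 < n) {ζ : A} (hζ : IsPrimitiveRoot ζ n) :
    Qz K n = ℚ⟮ζ⟯ := adjoin_pow_eq_simple K ℚ hn hζ

lemma finrank_Qz {n : ℕ} (hn : 0 < n) : Module.finrank ℚ ↥(Qz K n) = n.totient := by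
  obtain ⟨ζ, hζ⟩ := exists_primroot K hn
  rw [Qz_eq_simple K hn hζ, IntermediateField.adjoin.finrank (zeta_integral K ζ),
    ← Polynomial.cyclotomic_eq_minpoly_rat hζ hn, Polynomial.natDegree_cyclotomic]

instance fd_Qz (n : ℕ) [NeZero n] : FiniteDimensional ℚ ↥(Qz K n) := by
  obtain ⟨ζ, hζ⟩ := exists_primroot K (Nat.pos_of_ne_zero (NeZero.ne n))
  rw [Qz_eq_simple K (Nat.pos_of_ne_zero (NeZero.ne n)) hζ]
  exact IntermediateField.adjoin.finiteDimensional (zeta_integral K ζ)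

lemma fd_of_le {X Y : IntermediateField ℚ (A)} (h : X ≤ Y) [FiniteDimensional ℚ ↥Y] :
    FiniteDimensional ℚ ↥X :=
  FiniteDimensional.of_injective (IntermediateField.inclusion h).toLinearMap
    (IntermediateField.inclusion_injective h)

lemma Qz_le_Qcyc {n : ℕ} (hn : 0 < n) : Qz K n ≤ Qcyc K :=
  IntermediateField.adjoin.mono _ _ _ (fun x hx => ⟨n, hn, hx⟩)

lemma isIntegral_of_pow_eq_one (F : Type*) [Field F] [Algebra F (A)] {n : ℕ} (hn : 0 < n)
    {ζ : A} (h : ζ ^ n = 1) : IsIntegral F ζ := by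
  refine ⟨X ^ n - 1, ?_, ?_⟩
  · simpa using Polynomial.monic_X_pow_sub_C (1 : F) hn.ne'
  · simp [h]

lemma finrank_sup_simple (X : IntermediateField ℚ (A)) [FiniteDimensional ℚ ↥X]
    {ζ : A} (hζ : IsIntegral ℚ ζ) (hint : IsIntegral ↥X ζ) :
    Module.finrank ℚ ↥(X ⊔ IntermediateField.adjoin ℚ {ζ})
      = Module.finrank ℚ ↥X * (minpoly ↥X ζ).natDegree := by
  have h1 : IntermediateField.restrictScalars ℚ (IntermediateField.adjoin ↥X ({ζ} : Set (A)))
      = X ⊔ IntermediateField.adjoin ℚ {ζ} :=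
    IntermediateField.restrictScalars_adjoin_eq_sup (F := ℚ) X ({ζ} : Set (A))
  rw [← h1]
  have h2 : Module.finrank ℚ ↥(IntermediateField.restrictScalars ℚ
      (IntermediateField.adjoin ↥X ({ζ} : Set (A))))
      = Module.finrank ℚ ↥(IntermediateField.adjoin ↥X ({ζ} : Set (A))) := rfl
  rw [h2, ← IntermediateField.adjoin.finrank hint]
  exact (Module.finrank_mul_finrank ℚ ↥X ↥(IntermediateField.adjoin ↥X ({ζ} : Set (A)))).symm

lemma natDegree_minpoly_le_of_le {N X : IntermediateField ℚ (A)} (h : N ≤ X) (x : A)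
    (hN : IsIntegral ↥N x) :
    (minpoly ↥X x).natDegree ≤ (minpoly ↥N x).natDegree := by
  set p := minpoly ↥N x with hp
  have hmono : p.Monic := minpoly.monic hN
  set q := p.map (IntermediateField.inclusion h).toRingHom with hq
  have hqmonic : q.Monic := hmono.map _
  have haev : Polynomial.aeval x q = 0 := by
    rw [hq, Polynomial.aeval_def, Polynomial.eval₂_map]
    have hcomp : (algebraMap ↥X (A)).comp (IntermediateField.inclusion h).toRingHom
        = algebraMap ↥N (A) := RingHom.ext fun y => rfl
    rw [hcomp, ← Polynomial.aeval_def, minpoly.aeval]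
  have hmin := minpoly.min ↥X x hqmonic haev
  calc (minpoly ↥X x).natDegree ≤ q.natDegree := Polynomial.natDegree_le_natDegree hmin
    _ = p.natDegree := hmono.natDegree_map _

lemma coeff_multiset_prod_mem (N : IntermediateField ℚ (A)) (s : Multiset (A))
    (hs : ∀ r ∈ s, r ∈ N) (i : ℕ) : ((s.map (fun r => X - C r)).prod).coeff i ∈ N := by
  induction s using Multiset.induction_on generalizing i with
  | empty =>
    rw [Multiset.map_zero, Multiset.prod_zero, Polynomial.coeff_one]
    split_ifs
    · exact one_mem N
    · exact zero_mem N
  | cons a t ih =>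
    have ha : a ∈ N := hs a (Multiset.mem_cons_self a t)
    have ht : ∀ r ∈ t, r ∈ N := fun r hr => hs r (Multiset.mem_cons_of_mem hr)
    rw [Multiset.map_cons, Multiset.prod_cons, Polynomial.coeff_mul]
    refine sum_mem (fun p hp => mul_mem ?_ (ih ht p.2))
    rw [Polynomial.coeff_sub, Polynomial.coeff_X, Polynomial.coeff_C]
    split_ifs <;>
      exact sub_mem (by first | exact one_mem N | exact zero_mem N)
        (by first | exact ha | exact zero_mem N)

lemma natDegree_minpoly_le_of_coeff_mem (N : IntermediateField ℚ (A)) {x : A}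
    {p : Polynomial (A)} (hmono : p.Monic) (heval : Polynomial.eval x p = 0)
    (hc : ∀ i, p.coeff i ∈ N) :
    (minpoly ↥N x).natDegree ≤ p.natDegree := by
  set T : Subring (A) := N.toSubfield.toSubring with hT
  have hsub : (↑p.coeffs : Set (A)) ⊆ T := by
    intro c hcc
    simp only [Polynomial.coeffs, Finset.coe_image, Set.mem_image] at hcc
    obtain ⟨j, _, rfl⟩ := hcc
    exact hc j
  let q : Polynomial ↥N := p.toSubring T hsub
  have hmap : q.map (Subring.subtype T) = p := Polynomial.map_toSubring p T hsub
  have hqmonic : Monic q := (Polynomial.monic_toSubring _ _ _).2 hmono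
  have haev : Polynomial.aeval x q = 0 := by
    rw [Polynomial.aeval_def, Polynomial.eval₂_eq_eval_map]
    have halg : q.map (algebraMap ↥N (A)) = p := hmap
    rw [halg, heval]
  have hmin := minpoly.min ↥N x hqmonic haev
  calc (minpoly ↥N x).natDegree ≤ q.natDegree := Polynomial.natDegree_le_natDegree hmin
    _ = p.natDegree := Polynomial.natDegree_toSubring _ _ _

lemma zpow_mem' (E : IntermediateField ℚ (A)) {x : A} (h : x ∈ E) (a : ℤ) : x ^ a ∈ E := by
  cases a with
  | ofNat j => simpa using pow_mem h j
  | negSucc j => simpa [zpow_negSucc] using inv_mem (pow_mem h (j + 1))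

lemma Qz_sup_Qz {m n : ℕ} (hm : 0 < m) (hn : 0 < n) :
    Qz K m ⊔ Qz K n = Qz K (Nat.lcm m n) := by
  have hg : 0 < Nat.gcd m n := Nat.gcd_pos_of_pos_left n hm
  have hN : 0 < Nat.lcm m n := Nat.pos_of_ne_zero (Nat.lcm_ne_zero hm.ne' hn.ne')
  apply le_antisymm
  · exact sup_le (Qz_mono K (Nat.dvd_lcm_left m n)) (Qz_mono K (Nat.dvd_lcm_right m n))
  · rw [Qz, IntermediateField.adjoin_le_iff]
    intro x hx
    simp only [Set.mem_setOf_eq] at hx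
    have hx0 : x ≠ 0 := by
      intro h0
      rw [h0, zero_pow hN.ne'] at hx
      exact zero_ne_one hx
    set g := Nat.gcd m n with hgdef
    obtain ⟨m₁, hm₁⟩ : g ∣ m := Nat.gcd_dvd_left m n
    obtain ⟨n₁, hn₁⟩ : g ∣ n := Nat.gcd_dvd_right m n
    have hlcm_eq : m * n₁ = Nat.lcm m n := by
      have h2 : g * Nat.lcm m n = m * n := Nat.gcd_mul_lcm m n
      have h3 : g * (m * n₁) = g * Nat.lcm m n := by
        rw [h2, hn₁]; ring
      exact Nat.eq_of_mul_eq_mul_left hg h3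
    have hlcm_eq' : n * m₁ = Nat.lcm m n := by
      have h2 : g * Nat.lcm m n = m * n := Nat.gcd_mul_lcm m n
      have h3 : g * (n * m₁) = g * Nat.lcm m n := by
        rw [h2, hm₁]; ring
      exact Nat.eq_of_mul_eq_mul_left hg h3
    have hy : x ^ n₁ ∈ Qz K m := by
      apply IntermediateField.subset_adjoin
      simp only [Set.mem_setOf_eq]
      rw [← pow_mul, mul_comm, hlcm_eq, hx]
    have hz : x ^ m₁ ∈ Qz K n := by
      apply IntermediateField.subset_adjoin
      simp only [Set.mem_setOf_eq]
      rw [← pow_mul, mul_comm, hlcm_eq', hx]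
    set a := Nat.gcdA m n with hadef
    set b := Nat.gcdB m n with hbdef
    have hbez : (g : ℤ) = m * a + n * b := Nat.gcd_eq_gcd_ab m n
    have hkey : (m₁ : ℤ) * a + (n₁ : ℤ) * b = 1 := by
      have hgz : (g : ℤ) ≠ 0 := Int.natCast_ne_zero.2 hg.ne'
      apply mul_left_cancel₀ hgz
      rw [mul_one]
      calc (g : ℤ) * ((m₁ : ℤ) * a + (n₁ : ℤ) * b)
          = ((g * m₁ : ℕ) : ℤ) * a + ((g * n₁ : ℕ) : ℤ) * b := by push_cast; ring
        _ = (m : ℤ) * a + (n : ℤ) * b := by rw [← hm₁, ← hn₁]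
        _ = (g : ℤ) := hbez.symm
    have hxeq : x = (x ^ m₁) ^ a * (x ^ n₁) ^ b := by
      conv_lhs => rw [show x = x ^ ((m₁ : ℤ) * a + (n₁ : ℤ) * b) by rw [hkey, zpow_one]]
      rw [zpow_add₀ hx0, zpow_mul, zpow_mul, zpow_natCast, zpow_natCast]
    rw [hxeq]
    exact mul_mem
      (le_sup_right (α := IntermediateField ℚ (A)) (zpow_mem' K (Qz K n) hz a))
      (le_sup_left (α := IntermediateField ℚ (A)) (zpow_mem' K (Qz K m) hy b))

noncomputable def eKF : K ≃ₐ[ℚ] ↥(KF K) :=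
  ((IntermediateField.botEquiv K (A)).restrictScalars ℚ).symm

lemma finrank_KF : Module.finrank ℚ ↥(KF K) = Module.finrank ℚ K :=
  ((eKF K).symm.toLinearEquiv).finrank_eq

instance fd_KF : FiniteDimensional ℚ ↥(KF K) :=
  Module.Finite.equiv (eKF K).toLinearEquiv

lemma finrank_KF_sup_Qz (n : ℕ) :
    Module.finrank ℚ ↥(KF K ⊔ Qz K n) = Module.finrank ℚ K * phiK K n := by
  set S := {x : A | x ^ n = 1} with hS
  have hcomp : algebraMap K (A) = (algebraMap ↥(KF K) (A)) ∘ (eKF K) := by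
    funext x
    rfl
  have h1 : (IntermediateField.adjoin K S).restrictScalars ℚ
      = (IntermediateField.adjoin ↥(KF K) S).restrictScalars ℚ :=
    IntermediateField.restrictScalars_adjoin_of_algEquiv (eKF K) hcomp S
  have h2 : (IntermediateField.adjoin ↥(KF K) S).restrictScalars ℚ
      = KF K ⊔ IntermediateField.adjoin ℚ S :=
    IntermediateField.restrictScalars_adjoin_eq_sup (F := ℚ) (KF K) S
  have h3 : KF K ⊔ Qz K n = (IntermediateField.adjoin K S).restrictScalars ℚ := by
    rw [h1, h2]; rfl
  rw [h3]
  have h4 : Module.finrank ℚ ↥((IntermediateField.adjoin K S).restrictScalars ℚ)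
      = Module.finrank ℚ ↥(IntermediateField.adjoin K S) := rfl
  rw [h4, phiK]
  exact (Module.finrank_mul_finrank ℚ K ↥(IntermediateField.adjoin K S)).symm

lemma main_count (E : IntermediateField ℚ (A)) [FiniteDimensional ℚ ↥E] {n : ℕ} (hn : 0 < n) :
    Module.finrank ℚ ↥(E ⊔ Qz K n) * Module.finrank ℚ ↥(E ⊓ Qz K n)
      = Module.finrank ℚ ↥E * n.totient := by
  obtain ⟨ζ, hζ⟩ := exists_primroot K hn
  have hpow : ζ ^ n = 1 := hζ.pow_eq_one
  have hQ : Qz K n = IntermediateField.adjoin ℚ {ζ} := Qz_eq_simple K hn hζ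
  haveI : NeZero n := ⟨hn.ne'⟩
  haveI : FiniteDimensional ℚ ↥(Qz K n) := fd_Qz K n
  set N := E ⊓ Qz K n with hN
  haveI : FiniteDimensional ℚ ↥N := fd_of_le K (inf_le_right : N ≤ Qz K n)
  have hζint : IsIntegral ℚ ζ := isIntegral_of_pow_eq_one K ℚ hn hpow
  have hXint : IsIntegral ↥E ζ := isIntegral_of_pow_eq_one K ↥E hn hpow
  have hNint : IsIntegral ↥N ζ := isIntegral_of_pow_eq_one K ↥N hn hpow
  have e1 : Module.finrank ℚ ↥(E ⊔ Qz K n)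
      = Module.finrank ℚ ↥E * (minpoly ↥E ζ).natDegree := by
    rw [hQ]; exact finrank_sup_simple K E hζint hXint
  have e2 : Module.finrank ℚ ↥(Qz K n)
      = Module.finrank ℚ ↥N * (minpoly ↥N ζ).natDegree := by
    have hsup : N ⊔ Qz K n = Qz K n := sup_eq_right.mpr inf_le_right
    conv_lhs => rw [← hsup, hQ]
    exact finrank_sup_simple K N hζint hNint
  have hle1 : (minpoly ↥E ζ).natDegree ≤ (minpoly ↥N ζ).natDegree :=
    natDegree_minpoly_le_of_le K (inf_le_left : N ≤ E) ζ hNint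
  have hle2 : (minpoly ↥N ζ).natDegree ≤ (minpoly ↥E ζ).natDegree := by
    set p := (minpoly ↥E ζ).map (algebraMap ↥E (A)) with hp
    have hpmonic : p.Monic := (minpoly.monic hXint).map _
    have hpeval : Polynomial.eval ζ p = 0 := by
      rw [hp, ← Polynomial.eval₂_eq_eval_map, ← Polynomial.aeval_def, minpoly.aeval]
    have hpdvd : p ∣ (X ^ n - 1 : Polynomial (A)) := by
      have h0 : minpoly ↥E ζ ∣ (X ^ n - 1 : Polynomial ↥E) := by
        apply minpoly.dvd
        simp [hpow]
      have hmapdvd := Polynomial.map_dvd (algebraMap ↥E (A)) h0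
      simpa using hmapdvd
    have hcoeff : ∀ i, p.coeff i ∈ N := by
      have hsplits : p.Splits := IsAlgClosed.splits p
      have hprod : p = (p.roots.map (fun r => X - C r)).prod :=
        hsplits.eq_prod_roots_of_monic hpmonic
      intro i
      constructor
      · rw [hp, Polynomial.coeff_map]
        exact ((minpoly ↥E ζ).coeff i).2
      · have hroots : ∀ r ∈ p.roots, r ∈ Qz K n := by
          intro r hr
          have hr' : Polynomial.eval r p = 0 := (Polynomial.mem_roots'.1 hr).2
          have hev : Polynomial.eval r (X ^ n - 1 : Polynomial (A)) = 0 :=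
            Polynomial.eval_eq_zero_of_dvd_of_eval_eq_zero hpdvd hr'
          have hrn : r ^ n = 1 := by
            simpa [sub_eq_zero] using hev
          exact IntermediateField.subset_adjoin ℚ _ hrn
        rw [hprod]
        exact coeff_multiset_prod_mem K (Qz K n) p.roots hroots i
    have hfin := natDegree_minpoly_le_of_coeff_mem K N hpmonic hpeval hcoeff
    calc (minpoly ↥N ζ).natDegree ≤ p.natDegree := hfin
      _ = (minpoly ↥E ζ).natDegree := (minpoly.monic hXint).natDegree_map _
  have hdeq : (minpoly ↥E ζ).natDegree = (minpoly ↥N ζ).natDegree :=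
    le_antisymm hle1 hle2
  calc Module.finrank ℚ ↥(E ⊔ Qz K n) * Module.finrank ℚ ↥N
      = Module.finrank ℚ ↥E * ((minpoly ↥E ζ).natDegree * Module.finrank ℚ ↥N) := by
        rw [e1]; ring
    _ = Module.finrank ℚ ↥E * (Module.finrank ℚ ↥N * (minpoly ↥N ζ).natDegree) := by
        rw [hdeq]; ring
    _ = Module.finrank ℚ ↥E * Module.finrank ℚ ↥(Qz K n) := by rw [← e2]
    _ = Module.finrank ℚ ↥E * n.totient := by rw [finrank_Qz K hn]

lemma tot_pow_mul {ℓ : ℕ} (hℓ : ℓ.Prime) {x : ℕ} (hx : ℓ ∣ x) (k : ℕ) :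
    Nat.totient (ℓ ^ k * x) = ℓ ^ k * Nat.totient x := by
  induction k with
  | zero => simp
  | succ j ih =>
    calc Nat.totient (ℓ ^ (j + 1) * x) = Nat.totient (ℓ * (ℓ ^ j * x)) := by ring_nf
      _ = ℓ * Nat.totient (ℓ ^ j * x) :=
          Nat.totient_mul_of_prime_of_dvd hℓ (hx.mul_left _)
      _ = ℓ ^ (j + 1) * Nat.totient x := by rw [ih]; ring

lemma mK_set_nonempty : Set.Nonempty {m : ℕ | 0 < m ∧ KF K ⊓ Qcyc K ≤ Qz K m} := by
  classical
  haveI : FiniteDimensional ℚ ↥(KF K ⊓ Qcyc K) :=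
    fd_of_le K (inf_le_left : KF K ⊓ Qcyc K ≤ KF K)
  set E := KF K ⊓ Qcyc K with hE
  have hsub : E ≤ ⨆ n : ℕ+, Qz K (n : ℕ) := by
    refine le_trans inf_le_right ?_
    rw [Qcyc, IntermediateField.adjoin_le_iff]
    rintro x ⟨n, hn, hxn⟩
    exact (le_iSup (fun n : ℕ+ => Qz K (n : ℕ)) ⟨n, hn⟩)
      (IntermediateField.subset_adjoin ℚ _ hxn)
  have helem : ∀ x : A, x ∈ E → ∃ n : ℕ, 0 < n ∧ x ∈ Qz K n := by
    intro x hx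
    obtain ⟨s, hs⟩ := IntermediateField.exists_finset_of_mem_iSup (hsub hx)
    refine ⟨∏ i ∈ s, (i : ℕ), Finset.prod_pos (fun i _ => i.2), ?_⟩
    have hle : (⨆ i ∈ s, Qz K (i : ℕ)) ≤ Qz K (∏ i ∈ s, (i : ℕ)) := by
      refine iSup_le fun i => iSup_le fun hi => Qz_mono K ?_
      exact Finset.dvd_prod_of_mem _ hi
    exact hle hs
  set g : A → ℕ := fun x => if hx : ∃ n : ℕ, 0 < n ∧ x ∈ Qz K n then hx.choose else 1
    with hg
  have hgpos : ∀ x : A, 0 < g x := by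
    intro x
    show 0 < if hx : ∃ n : ℕ, 0 < n ∧ x ∈ Qz K n then hx.choose else 1
    split_ifs with h
    · exact h.choose_spec.1
    · exact Nat.one_pos
  have hgmem : ∀ x : A, x ∈ E → x ∈ Qz K (g x) := by
    intro x hx
    have h := helem x hx
    show x ∈ Qz K (if hx : ∃ n : ℕ, 0 < n ∧ x ∈ Qz K n then hx.choose else 1)
    rw [dif_pos h]
    exact h.choose_spec.2
  let B := Module.finBasis ℚ ↥E
  set t : Finset (A) := Finset.image (fun i => ((B i : ↥E) : A)) Finset.univ with ht
  have htE : ∀ x ∈ t, x ∈ E := by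
    intro x hx
    rw [ht] at hx
    obtain ⟨i, _, rfl⟩ := Finset.mem_image.1 hx
    exact (B i).2
  have hgen : E ≤ IntermediateField.adjoin ℚ (t : Set (A)) := by
    intro x hx
    have hxsum : (⟨x, hx⟩ : ↥E) = ∑ i, B.repr ⟨x, hx⟩ i • B i := (B.sum_repr ⟨x, hx⟩).symm
    have hxval : x = ∑ i, B.repr ⟨x, hx⟩ i • ((B i : ↥E) : A) := by
      have h2 := congrArg (Subtype.val) hxsum
      exact h2.trans (IntermediateField.coe_sum E (fun i => B.repr ⟨x, hx⟩ i • B i))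
    rw [hxval]
    refine sum_mem (fun i _ => ?_)
    rw [Algebra.smul_def]
    refine mul_mem (IntermediateField.algebraMap_mem _ _) ?_
    refine IntermediateField.subset_adjoin ℚ _ ?_
    rw [ht]
    exact Finset.mem_coe.2 (Finset.mem_image.2 ⟨i, Finset.mem_univ i, rfl⟩)
  set N := ∏ x ∈ t, g x with hNdef
  have hNpos : 0 < N := Finset.prod_pos (fun x _ => hgpos x)
  refine ⟨N, hNpos, ?_⟩
  refine le_trans hgen ?_
  rw [IntermediateField.adjoin_le_iff]
  intro x hx
  have hx' : x ∈ t := hx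
  exact Qz_mono K (Finset.dvd_prod_of_mem g hx') (hgmem x (htE x hx'))

end AuxMain

/-- For a prime `ℓ ∣ m_K` with `b_ℓ = ord_ℓ(m_K)`:
`φ_K(ℓ^{b_ℓ+k}) = ℓ^k · φ_K(ℓ^{b_ℓ})` for all `k ≥ 0`. -/
theorem stmt_5 (K : Type) [Field K] [NumberField K] (ℓ : ℕ) (hℓ : ℓ.Prime) (hd : ℓ ∣ mK K) :
    ∀ k : ℕ, phiK K (ℓ ^ ((mK K).factorization ℓ + k)) =
      ℓ ^ k * phiK K (ℓ ^ ((mK K).factorization ℓ)) := by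
  intro k
  classical
  have hmem : mK K ∈ {m : ℕ | 0 < m ∧ KF K ⊓ Qcyc K ≤ Qz K m} :=
    Nat.sInf_mem (mK_set_nonempty K)
  obtain ⟨hm0, hmle⟩ := hmem
  set m := mK K with hmdef
  set b := m.factorization ℓ with hbdef
  have hb1 : 0 < b := hℓ.factorization_pos_of_dvd hm0.ne' hd
  have hℓ0 : 0 < ℓ := hℓ.pos
  have hnk : 0 < ℓ ^ (b + k) := pow_pos hℓ0 _
  have hn0 : 0 < ℓ ^ b := pow_pos hℓ0 _
  have hmlk : 0 < m * ℓ ^ k := Nat.mul_pos hm0 (pow_pos hℓ0 _)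
  -- arithmetic facts
  have hordproj : ℓ ^ b ∣ m := Nat.ordProj_dvd m ℓ
  have hmfac : ℓ ^ b * (m / ℓ ^ b) = m := Nat.ordProj_mul_ordCompl_eq_self m ℓ
  have hm'nd : ¬ ℓ ∣ (m / ℓ ^ b) := Nat.not_dvd_ordCompl hℓ hm0.ne'
  have hgcd : Nat.gcd m (ℓ ^ (b + k)) = ℓ ^ b := by
    have hcop : Nat.Coprime (m / ℓ ^ b) (ℓ ^ k) :=
      (((Nat.Prime.coprime_iff_not_dvd hℓ).2 hm'nd).symm).pow_right k
    calc Nat.gcd m (ℓ ^ (b + k)) = Nat.gcd (ℓ ^ b * (m / ℓ ^ b)) (ℓ ^ b * ℓ ^ k) := by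
          rw [hmfac, pow_add]
      _ = ℓ ^ b * Nat.gcd (m / ℓ ^ b) (ℓ ^ k) := Nat.gcd_mul_left _ _ _
      _ = ℓ ^ b := by rw [Nat.Coprime.gcd_eq_one hcop, mul_one]
  have hlcm : Nat.lcm m (ℓ ^ (b + k)) = m * ℓ ^ k := by
    have h1 : Nat.gcd m (ℓ ^ (b + k)) * Nat.lcm m (ℓ ^ (b + k)) = m * ℓ ^ (b + k) :=
      Nat.gcd_mul_lcm _ _
    rw [hgcd] at h1
    apply Nat.eq_of_mul_eq_mul_left hn0
    rw [h1, pow_add]; ring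
  have htot1 : (m * ℓ ^ k).totient = ℓ ^ k * m.totient := by
    rw [mul_comm m]; exact tot_pow_mul hℓ hd k
  have htot2 : (ℓ ^ (b + k)).totient = ℓ ^ k * (ℓ ^ b).totient := by
    have hsplit : ℓ ^ (b + k) = ℓ ^ k * ℓ ^ b := by rw [← pow_add, add_comm]
    rw [hsplit]; exact tot_pow_mul hℓ (dvd_pow_self ℓ hb1.ne') k
  -- intermediate fields
  haveI : NeZero m := ⟨hm0.ne'⟩
  haveI : NeZero (ℓ ^ (b + k)) := ⟨hnk.ne'⟩
  haveI : NeZero (ℓ ^ b) := ⟨hn0.ne'⟩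
  haveI : FiniteDimensional ℚ ↥(Qz K m) := fd_Qz K m
  haveI : FiniteDimensional ℚ ↥(Qz K (ℓ ^ (b + k))) := fd_Qz K _
  haveI : FiniteDimensional ℚ ↥(Qz K (ℓ ^ b)) := fd_Qz K _
  haveI : FiniteDimensional ℚ ↥(Qz K m ⊓ Qz K (ℓ ^ (b + k))) :=
    fd_of_le K (inf_le_right : Qz K m ⊓ Qz K (ℓ ^ (b + k)) ≤ Qz K (ℓ ^ (b + k)))
  -- Step B : Qz K m ⊓ Qz K (ℓ^(b+k)) = Qz K (ℓ^b)
  have hMQk : Qz K m ⊔ Qz K (ℓ ^ (b + k)) = Qz K (m * ℓ ^ k) := by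
    rw [Qz_sup_Qz K hm0 hnk, hlcm]
  have hcount_M := main_count K (Qz K m) hnk
  rw [hMQk, finrank_Qz K hmlk, finrank_Qz K hm0, htot1, htot2] at hcount_M
  have hfinN' : Module.finrank ℚ ↥(Qz K m ⊓ Qz K (ℓ ^ (b + k))) = (ℓ ^ b).totient := by
    have hpos : 0 < ℓ ^ k * m.totient :=
      Nat.mul_pos (pow_pos hℓ0 _) (Nat.totient_pos.2 hm0)
    apply Nat.eq_of_mul_eq_mul_left hpos
    calc (ℓ ^ k * m.totient) * Module.finrank ℚ ↥(Qz K m ⊓ Qz K (ℓ ^ (b + k)))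
        = (ℓ ^ k * m.totient) * Module.finrank ℚ ↥(Qz K m ⊓ Qz K (ℓ ^ (b + k))) := rfl
      _ = m.totient * (ℓ ^ k * (ℓ ^ b).totient) := hcount_M
      _ = (ℓ ^ k * m.totient) * (ℓ ^ b).totient := by ring
  have hQ0le : Qz K (ℓ ^ b) ≤ Qz K m ⊓ Qz K (ℓ ^ (b + k)) :=
    le_inf (Qz_mono K hordproj) (Qz_mono K (pow_dvd_pow ℓ (Nat.le_add_right b k)))
  have hQ0eq : Qz K (ℓ ^ b) = Qz K m ⊓ Qz K (ℓ ^ (b + k)) := by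
    apply IntermediateField.eq_of_le_of_finrank_le hQ0le
    rw [hfinN', finrank_Qz K hn0]
  -- Step C : KF K ⊓ Qz K (ℓ^(b+k)) = KF K ⊓ Qz K (ℓ^b)
  have hFk : KF K ⊓ Qz K (ℓ ^ (b + k)) = KF K ⊓ Qz K (ℓ ^ b) := by
    apply le_antisymm
    · refine le_inf inf_le_left ?_
      have h1 : KF K ⊓ Qz K (ℓ ^ (b + k)) ≤ Qz K m ⊓ Qz K (ℓ ^ (b + k)) := by
        refine le_inf ?_ inf_le_right
        refine le_trans ?_ hmle
        exact le_inf inf_le_left (le_trans inf_le_right (Qz_le_Qcyc K hnk))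
      rw [← hQ0eq] at h1
      exact le_trans h1 le_rfl
    · exact le_inf inf_le_left
        (le_trans inf_le_right (Qz_mono K (pow_dvd_pow ℓ (Nat.le_add_right b k))))
  -- Step D : counting for F := KF K
  haveI : FiniteDimensional ℚ ↥(KF K ⊓ Qz K (ℓ ^ b)) :=
    fd_of_le K (inf_le_right : KF K ⊓ Qz K (ℓ ^ b) ≤ Qz K (ℓ ^ b))
  have hcF_k := main_count K (KF K) hnk
  have hcF_0 := main_count K (KF K) hn0
  rw [hFk] at hcF_k
  have hcpos : 0 < Module.finrank ℚ ↥(KF K ⊓ Qz K (ℓ ^ b)) := Module.finrank_pos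
  have hkey : Module.finrank ℚ ↥(KF K ⊔ Qz K (ℓ ^ (b + k)))
      = ℓ ^ k * Module.finrank ℚ ↥(KF K ⊔ Qz K (ℓ ^ b)) := by
    apply Nat.eq_of_mul_eq_mul_right hcpos
    calc Module.finrank ℚ ↥(KF K ⊔ Qz K (ℓ ^ (b + k)))
          * Module.finrank ℚ ↥(KF K ⊓ Qz K (ℓ ^ b))
        = Module.finrank ℚ ↥(KF K) * (ℓ ^ (b + k)).totient := hcF_k
      _ = ℓ ^ k * (Module.finrank ℚ ↥(KF K) * (ℓ ^ b).totient) := by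
          rw [htot2]; ring
      _ = ℓ ^ k * (Module.finrank ℚ ↥(KF K ⊔ Qz K (ℓ ^ b))
          * Module.finrank ℚ ↥(KF K ⊓ Qz K (ℓ ^ b))) := by rw [hcF_0]
      _ = (ℓ ^ k * Module.finrank ℚ ↥(KF K ⊔ Qz K (ℓ ^ b)))
          * Module.finrank ℚ ↥(KF K ⊓ Qz K (ℓ ^ b)) := by ring
  -- Step E : bridge to phiK
  have hb_k := finrank_KF_sup_Qz K (ℓ ^ (b + k))
  have hb_0 := finrank_KF_sup_Qz K (ℓ ^ b)
  have hKpos : 0 < Module.finrank ℚ K := Module.finrank_pos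
  apply Nat.eq_of_mul_eq_mul_left hKpos
  calc Module.finrank ℚ K * phiK K (ℓ ^ (b + k))
      = Module.finrank ℚ ↥(KF K ⊔ Qz K (ℓ ^ (b + k))) := hb_k.symm
    _ = ℓ ^ k * Module.finrank ℚ ↥(KF K ⊔ Qz K (ℓ ^ b)) := hkey
    _ = ℓ ^ k * (Module.finrank ℚ K * phiK K (ℓ ^ b)) := by rw [hb_0]
    _ = Module.finrank ℚ K * (ℓ ^ k * phiK K (ℓ ^ b)) := by ring
end

section
/- The Dirichlet series D(s) = Σ_{n≥1} 1/(φ(n) n^{s−1}) factors as D(s) = ζ(s)·ζ(s+1)·h(s), where h(s) = ∏_ℓ (1 + ℓ^{−(s+2)} (1 − ℓ^{−s}) (1 − 1/ℓ)^{−1}), the product running over all primes ℓ, valid for Re(s) > 1. -/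
open Filter Asymptotics

/-- The Euler product `h(s) = ∏_ℓ (1 + ℓ^{-(s+2)}(1 - ℓ^{-s})(1 - 1/ℓ)⁻¹)` over primes. -/
noncomputable def hfun (s : ℂ) : ℂ :=
  ∏' p : Nat.Primes, (1 + (p : ℂ) ^ (-(s + 2)) * (1 - (p : ℂ) ^ (-s)) * (1 - 1 / (p : ℂ))⁻¹)

open ArithmeticFunction LSeries
open scoped ArithmeticFunction.zeta

/-- `G n = μ(n)²/φ(n)`. -/
noncomputable def Gfn : ArithmeticFunction ℂ :=
  ⟨fun n => if Squarefree n then ((Nat.totient n : ℂ))⁻¹ else 0, by simp [not_squarefree_zero]⟩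

/-- `H n = n/φ(n)`. -/
noncomputable def Hfn : ArithmeticFunction ℂ :=
  ⟨fun n => (n : ℂ) / (Nat.totient n : ℂ), by simp⟩

lemma Gfn_isMultiplicative : Gfn.IsMultiplicative := by
  constructor
  · simp [Gfn, squarefree_one]
  · intro m n h
    rcases eq_or_ne m 0 with rfl | hm
    · simp [Nat.coprime_zero_left _ |>.mp h]
    rcases eq_or_ne n 0 with rfl | hn
    · simp [Nat.coprime_zero_right _ |>.mp h]
    by_cases hsm : Squarefree m <;> by_cases hsn : Squarefree n <;>
      simp [Gfn, Nat.squarefree_mul h, hsm, hsn, Nat.totient_mul h, mul_inv, mul_comm]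

lemma Hfn_isMultiplicative : Hfn.IsMultiplicative := by
  constructor
  · simp [Hfn]
  · intro m n h
    simp only [Hfn, ArithmeticFunction.coe_mk, Nat.totient_mul h, Nat.cast_mul]
    rw [div_mul_div_comm]

lemma zeta_mul_Gfn : (↑ζ * Gfn : ArithmeticFunction ℂ) = Hfn := by
  rw [ArithmeticFunction.IsMultiplicative.eq_iff_eq_on_prime_powers _
    (isMultiplicative_zeta.natCast.mul Gfn_isMultiplicative) _ Hfn_isMultiplicative]
  intro p k hp
  have hp0 : (p : ℂ) ≠ 0 := Nat.cast_ne_zero.mpr hp.pos.ne'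
  have hp1 : (p : ℂ) - 1 ≠ 0 := by
    intro h
    have : (p : ℂ) = 1 := by linear_combination h
    exact hp.one_lt.ne' (by exact_mod_cast this)
  rw [coe_zeta_mul_apply, Nat.sum_divisors_prime_pow hp]
  rcases Nat.eq_zero_or_pos k with rfl | hk
  · simp [Gfn, Hfn, squarefree_one]
  · have hsub : Finset.range 2 ⊆ Finset.range (k + 1) := by
      apply Finset.range_subset_range.mpr; omega
    rw [← Finset.sum_subset hsub]
    · have h2 : ∑ i ∈ Finset.range 2, Gfn (p ^ i) = 1 + ((p : ℂ) - 1)⁻¹ := by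
        rw [Finset.sum_range_succ, Finset.sum_range_one]
        simp [Gfn, squarefree_one, hp.squarefree, Nat.totient_prime hp,
          Nat.cast_sub hp.one_lt.le]
      rw [h2]
      -- Hfn (p^k) = p^k / φ(p^k) = p/(p-1)
      have hφ : (Nat.totient (p ^ k) : ℂ) = (p : ℂ) ^ (k - 1) * ((p : ℂ) - 1) := by
        rw [Nat.totient_prime_pow hp hk]
        push_cast [Nat.cast_sub hp.one_lt.le]
        ring
      have hpk : (p : ℂ) ^ k = (p : ℂ) ^ (k - 1) * (p : ℂ) := by
        conv_lhs => rw [show k = (k - 1) + 1 by omega]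
        rw [pow_succ]
      simp only [Hfn, ArithmeticFunction.coe_mk, Nat.cast_pow, hφ, hpk]
      field_simp
      ring
    · intro x hx hx2
      have : 2 ≤ x := by simp at hx2 ⊢; omega
      have : ¬ Squarefree (p ^ x) := by
        intro h
        have hd : p * p ∣ p ^ x := (sq p) ▸ pow_dvd_pow p ‹2 ≤ x›
        exact hp.ne_one (Nat.isUnit_iff.mp (h p hd))
      simp [Gfn, this]

lemma cpow_natCast_mul' (x : ℂ) (hx : x ≠ 0) (y : ℂ) (e : ℕ) :
    x ^ ((e : ℂ) * y) = (x ^ y) ^ e := by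
  induction e with
  | zero => simp
  | succ e ih =>
    rw [pow_succ, ← ih, Nat.cast_succ, add_mul, one_mul, Complex.cpow_add _ _ hx]

lemma natCast_pow_cpow (p : ℕ) (e : ℕ) (y : ℂ) (hp : p ≠ 0) :
    ((p : ℂ) ^ e) ^ y = ((p : ℂ) ^ y) ^ e := by
  rw [← Complex.natCast_cpow_natCast_mul p e y,
    cpow_natCast_mul' _ (Nat.cast_ne_zero.mpr hp)]

lemma hasProd_inv_aux {ι : Type*} {f : ι → ℂ} {a : ℂ} (h : HasProd (fun i => (f i)⁻¹) a)
    (ha : a ≠ 0) : HasProd f a⁻¹ := by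
  have := Filter.Tendsto.inv₀ h ha
  simpa [HasProd, Finset.prod_inv_distrib] using this


/-- For `Re(s) > 1`, `D(s) = Σ_{n≥1} 1/(φ(n) n^{s-1})` converges and factors as
`ζ(s)·ζ(s+1)·h(s)`. -/
theorem stmt_9 (s : ℂ) (hs : 1 < s.re) :
    Summable (fun n : ℕ => if n = 0 then 0 else 1 / ((Nat.totient n : ℂ) * (n : ℂ) ^ (s - 1))) ∧
    ∑' n : ℕ, (if n = 0 then 0 else 1 / ((Nat.totient n : ℂ) * (n : ℂ) ^ (s - 1))) =
      riemannZeta s * riemannZeta (s + 1) * hfun s := by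
  set f : ℕ → ℂ := fun n => term (⇑Hfn) s n with hfdef
  have hfeq : (fun n : ℕ => if n = 0 then 0 else 1 / ((Nat.totient n : ℂ) * (n : ℂ) ^ (s - 1)))
      = f := by
    funext n
    rcases eq_or_ne n 0 with rfl | hn
    · simp [hfdef, term]
    · have hn0 : (n : ℂ) ≠ 0 := Nat.cast_ne_zero.mpr hn
      have hφ : (Nat.totient n : ℂ) ≠ 0 :=
        Nat.cast_ne_zero.mpr (Nat.totient_pos.mpr (Nat.pos_of_ne_zero hn)).ne'
      have hns : (n : ℂ) ^ s = (n : ℂ) ^ (s - 1) * (n : ℂ) := by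
        conv_lhs => rw [show s = (s - 1) + 1 by ring]
        rw [Complex.cpow_add _ _ hn0, Complex.cpow_one]
      have hcp : (n : ℂ) ^ (s - 1) ≠ 0 := by
        intro h
        rcases (Complex.cpow_eq_zero_iff _ _).mp h with ⟨h1, -⟩
        exact hn0 h1
      rw [if_neg hn, hfdef]
      simp only []
      rw [term_of_ne_zero hn]
      simp only [Hfn, ArithmeticFunction.coe_mk]
      rw [hns]
      field_simp
  rw [hfeq]
  -- summability of norms
  have hGbd : ∀ n : ℕ, n ≠ 0 → ‖Gfn n‖ ≤ 1 := by
    intro n hn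
    simp only [Gfn, ArithmeticFunction.coe_mk]
    split_ifs
    · rw [norm_inv, Complex.norm_natCast]
      have h1 : (1 : ℝ) ≤ (Nat.totient n : ℝ) := by
        exact_mod_cast Nat.one_le_iff_ne_zero.mpr (Nat.totient_pos.mpr (Nat.pos_of_ne_zero hn)).ne'
      rw [inv_le_one_iff₀]
      right; exact h1
    · simp
  have hZbd : ∀ n : ℕ, n ≠ 0 → ‖(↑(ζ : ArithmeticFunction ℕ) : ArithmeticFunction ℂ) n‖ ≤ 1 := by
    intro n hn
    simp [ArithmeticFunction.natCoe_apply, ArithmeticFunction.zeta_apply, hn]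
  have hsummσ : LSeriesSummable (⇑Hfn) (s.re : ℂ) := by
    rw [← zeta_mul_Gfn]
    exact LSeriesSummable_mul
      (LSeriesSummable_of_bounded_of_one_lt_real hZbd hs)
      (LSeriesSummable_of_bounded_of_one_lt_real hGbd hs)
  have hnormsum : Summable (fun n => ‖f n‖) := by
    have h1 : Summable (fun n => (term (⇑Hfn) (s.re : ℂ) n).re) :=
      (Complex.hasSum_re hsummσ.hasSum).summable
    refine h1.congr fun n => ?_
    rcases eq_or_ne n 0 with rfl | hn
    · simp [hfdef, term]
    · rw [hfdef]
      simp only []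
      rw [norm_term_eq, if_neg hn, term_of_ne_zero hn]
      have hHr : (Hfn n : ℂ) = (((n : ℝ) / (Nat.totient n : ℝ) : ℝ) : ℂ) := by
        simp only [Hfn, ArithmeticFunction.coe_mk]
        push_cast
        rfl
      have hcp : ((n : ℂ) ^ (s.re : ℂ)) = ((((n : ℝ) ^ s.re : ℝ)) : ℂ) := by
        rw [show ((n : ℂ)) = (((n : ℝ)) : ℂ) by norm_cast, ← Complex.ofReal_cpow (Nat.cast_nonneg n)]
      rw [hHr, hcp, ← Complex.ofReal_div, Complex.ofReal_re, Complex.norm_real,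
        Real.norm_eq_abs, abs_of_nonneg (by positivity), div_div]
  -- multiplicativity of the terms
  have hf1 : f 1 = 1 := by
    rw [hfdef]
    simp only []
    rw [term_of_ne_zero one_ne_zero]
    simp [Hfn]
  have hmul : ∀ {m n : ℕ}, Nat.Coprime m n → f (m * n) = f m * f n := by
    intro m n h
    rcases eq_or_ne m 0 with rfl | hm
    · obtain rfl : n = 1 := (Nat.coprime_zero_left n).mp h
      simp [hfdef, term, hf1]
    rcases eq_or_ne n 0 with rfl | hn
    · obtain rfl : m = 1 := (Nat.coprime_zero_right m).mp h
      simp [hfdef, term, hf1]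
    · rw [hfdef]
      simp only []
      rw [term_of_ne_zero (mul_ne_zero hm hn), term_of_ne_zero hm, term_of_ne_zero hn,
        Hfn_isMultiplicative.map_mul_of_coprime h, Nat.cast_mul,
        Complex.natCast_mul_natCast_cpow, mul_div_mul_comm]
  have hEP : HasProd (fun p : Nat.Primes => ∑' e, f ((p : ℕ) ^ e)) (∑' n, f n) :=
    EulerProduct.eulerProduct_hasProd hf1 hmul hnormsum (by simp [hfdef, term])
  -- local factors
  have hploc : ∀ p : Nat.Primes, (∑' e, f ((p : ℕ) ^ e)) =
      1 + ((p : ℂ) / ((p : ℂ) - 1)) * (p : ℂ) ^ (-s) * (1 - (p : ℂ) ^ (-s))⁻¹ := by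
    intro p
    have hp2 : 2 ≤ (p : ℕ) := p.prop.two_le
    have hpn0 : (p : ℕ) ≠ 0 := p.prop.pos.ne'
    have hp0 : ((p : ℕ) : ℂ) ≠ 0 := Nat.cast_ne_zero.mpr hpn0
    have hp1 : ((p : ℕ) : ℂ) - 1 ≠ 0 := by
      intro h
      have : ((p : ℕ) : ℂ) = 1 := by linear_combination h
      exact p.prop.one_lt.ne' (by exact_mod_cast this)
    have ht : ‖((p : ℕ) : ℂ) ^ (-s)‖ < 1 := by
      rw [Complex.norm_natCast_cpow_of_pos p.prop.pos]
      exact Real.rpow_lt_one_of_one_lt_of_neg (by exact_mod_cast p.prop.one_lt)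
        (by simp only [Complex.neg_re]; linarith)
    have hsumm : Summable (fun e => f ((p : ℕ) ^ e)) :=
      hnormsum.of_norm.comp_injective (Nat.pow_right_injective hp2)
    rw [Summable.tsum_eq_zero_add hsumm]
    have h0 : f ((p : ℕ) ^ 0) = 1 := by simpa using hf1
    have hterm : ∀ e : ℕ, f ((p : ℕ) ^ (e + 1)) =
        ((((p : ℕ) : ℂ) / (((p : ℕ) : ℂ) - 1)) * ((p : ℕ) : ℂ) ^ (-s)) * (((p : ℕ) : ℂ) ^ (-s)) ^ e := by
      intro e
      rw [hfdef]
      simp only []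
      rw [term_of_ne_zero (pow_ne_zero _ hpn0)]
      have hH : (Hfn ((p : ℕ) ^ (e + 1)) : ℂ) = ((p : ℕ) : ℂ) / (((p : ℕ) : ℂ) - 1) := by
        simp only [Hfn, ArithmeticFunction.coe_mk]
        rw [Nat.totient_prime_pow p.prop (Nat.succ_pos e), Nat.succ_sub_one]
        push_cast [Nat.cast_sub p.prop.one_lt.le]
        rw [pow_succ]
        rw [div_eq_div_iff (mul_ne_zero (pow_ne_zero _ hp0) hp1) hp1]
        ring
      rw [hH, Nat.cast_pow, natCast_pow_cpow _ _ _ hpn0]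
      rw [div_eq_mul_inv, ← inv_pow, ← Complex.cpow_neg]
      rw [pow_succ]
      ring
    rw [h0, tsum_congr hterm, tsum_mul_left, tsum_geometric_of_norm_lt_one ht]
  -- zeta Euler products
  have hs1 : 1 < (s + 1).re := by
    simp only [Complex.add_re, Complex.one_re]
    linarith
  have hz1 : HasProd (fun p : Nat.Primes => (1 - (p : ℂ) ^ (-s))⁻¹) (riemannZeta s) :=
    riemannZeta_eulerProduct_hasProd hs
  have hz2 : HasProd (fun p : Nat.Primes => (1 - (p : ℂ) ^ (-(s + 1)))⁻¹) (riemannZeta (s + 1)) :=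
    riemannZeta_eulerProduct_hasProd hs1
  have hζ1 : riemannZeta s ≠ 0 := riemannZeta_ne_zero_of_one_lt_re hs
  have hζ2 : riemannZeta (s + 1) ≠ 0 := riemannZeta_ne_zero_of_one_lt_re hs1
  have hz1' : HasProd (fun p : Nat.Primes => 1 - (p : ℂ) ^ (-s)) (riemannZeta s)⁻¹ :=
    hasProd_inv_aux hz1 hζ1
  have hz2' : HasProd (fun p : Nat.Primes => 1 - (p : ℂ) ^ (-(s + 1))) (riemannZeta (s + 1))⁻¹ :=
    hasProd_inv_aux hz2 hζ2
  have hptw : (fun p : Nat.Primes => (∑' e, f ((p : ℕ) ^ e)) * (1 - (p : ℂ) ^ (-s)) *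
      (1 - (p : ℂ) ^ (-(s + 1)))) =
      fun p : Nat.Primes => 1 + (p : ℂ) ^ (-(s + 2)) * (1 - (p : ℂ) ^ (-s)) * (1 - 1 / (p : ℂ))⁻¹ := by
    funext p
    rw [hploc p]
    have hpn0 : (p : ℕ) ≠ 0 := p.prop.pos.ne'
    have hp0 : ((p : ℕ) : ℂ) ≠ 0 := Nat.cast_ne_zero.mpr hpn0
    have hp1 : ((p : ℕ) : ℂ) - 1 ≠ 0 := by
      intro h
      have : ((p : ℕ) : ℂ) = 1 := by linear_combination h
      exact p.prop.one_lt.ne' (by exact_mod_cast this)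
    have ht : ‖((p : ℕ) : ℂ) ^ (-s)‖ < 1 := by
      rw [Complex.norm_natCast_cpow_of_pos p.prop.pos]
      exact Real.rpow_lt_one_of_one_lt_of_neg (by exact_mod_cast p.prop.one_lt)
        (by simp only [Complex.neg_re]; linarith)
    have ht1 : (1 : ℂ) - ((p : ℕ) : ℂ) ^ (-s) ≠ 0 := by
      intro h
      rw [sub_eq_zero] at h
      rw [← h] at ht
      simp at ht
    have h1p : (1 : ℂ) - 1 / ((p : ℕ) : ℂ) ≠ 0 := by
      rw [sub_ne_zero]
      intro h
      apply hp1
      field_simp at h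
      rw [h]; ring
    have e1 : ((p : ℕ) : ℂ) ^ (-(s + 1)) = ((p : ℕ) : ℂ) ^ (-s) * ((p : ℕ) : ℂ)⁻¹ := by
      rw [show -(s + 1) = -s + (-1) by ring, Complex.cpow_add _ _ hp0, Complex.cpow_neg_one]
    have e2 : ((p : ℕ) : ℂ) ^ (-(s + 2)) = ((p : ℕ) : ℂ) ^ (-s) * ((p : ℕ) : ℂ)⁻¹ * ((p : ℕ) : ℂ)⁻¹ := by
      rw [show -(s + 2) = -s + (-1) + (-1) by ring, Complex.cpow_add _ _ hp0,
        Complex.cpow_add _ _ hp0, Complex.cpow_neg_one]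
    rw [e1, e2]
    field_simp
    ring
  have hC : HasProd
      (fun p : Nat.Primes => 1 + (p : ℂ) ^ (-(s + 2)) * (1 - (p : ℂ) ^ (-s)) * (1 - 1 / (p : ℂ))⁻¹)
      ((∑' n, f n) * (riemannZeta s)⁻¹ * (riemannZeta (s + 1))⁻¹) :=
    hptw ▸ ((hEP.mul hz1').mul hz2')
  have hfin : hfun s = (∑' n, f n) * (riemannZeta s)⁻¹ * (riemannZeta (s + 1))⁻¹ := hC.tprod_eq
  refine ⟨hnormsum.of_norm, ?_⟩
  rw [hfin]
  field_simp
end
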